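/- arXiv:1902.11146 — 4 statements merged into one kernel-verified Lean document; each statement's English description precedes it below -/
import Mathlib

section
/- Let k ≥ 2 and let F̃(t,x,y) be the family of symmetric matrices [[x + t·a, b·t + c·t·y], [b·t + c·t·y, y² + x^k + t·Σ_{i=0}^{k−2} d_i x^i]] with a, b, c, d_i ∈ ℂ. Define the ideal I_D(F̃) in the ring of polynomials in (t,x,y,t′,x′,y′) generated by t − t′ and the doubles of the three distinct entries of F̃, and define I_D(θ) generated by c(y − y′) and Σ_{i=1}^{k−2} d_i (x^i − x′^i). If c = 0, then I_D(θ) ⊆ I_D(F̃). -/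
open MvPolynomial

/-- Variables: `t = X 0, x = X 1, y = X 2, t' = X 3, x' = X 4, y' = X 5`.
For the `D_{k+2}` family `F̃ = [[x + ta, bt + cty],[bt + cty, y² + x^k + tΣ d_i x^i]]`,
if `c = 0` then `I_D(θ) ⊆ I_D(F̃)`. -/
theorem ID_theta_subset_ID_Ftilde_Dk2 (k : ℕ) (hk : 2 ≤ k) (a b c : ℂ) (d : ℕ → ℂ)
    (hc : c = 0) :
    Ideal.span {(C c * (X 2 - X 5) : MvPolynomial (Fin 6) ℂ),
        ∑ i ∈ Finset.Icc 1 (k - 2), C (d i) * (X 1 ^ i - X 4 ^ i)} ≤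
      Ideal.span {(X 0 - X 3 : MvPolynomial (Fin 6) ℂ),
        (X 1 + X 0 * C a) - (X 4 + X 3 * C a),
        (C b * X 0 + C c * X 0 * X 2) - (C b * X 3 + C c * X 3 * X 5),
        (X 2 ^ 2 + X 1 ^ k + X 0 * ∑ i ∈ Finset.range (k - 1), C (d i) * X 1 ^ i) -
          (X 5 ^ 2 + X 4 ^ k + X 3 * ∑ i ∈ Finset.range (k - 1), C (d i) * X 4 ^ i)} := by
  subst hc
  rw [Ideal.span_le]
  set I := Ideal.span {(X 0 - X 3 : MvPolynomial (Fin 6) ℂ),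
        (X 1 + X 0 * C a) - (X 4 + X 3 * C a),
        (C b * X 0 + C (0:ℂ) * X 0 * X 2) - (C b * X 3 + C (0:ℂ) * X 3 * X 5),
        (X 2 ^ 2 + X 1 ^ k + X 0 * ∑ i ∈ Finset.range (k - 1), C (d i) * X 1 ^ i) -
          (X 5 ^ 2 + X 4 ^ k + X 3 * ∑ i ∈ Finset.range (k - 1), C (d i) * X 4 ^ i)} with hIdef
  have h1 : (X 0 - X 3 : MvPolynomial (Fin 6) ℂ) ∈ I :=
    Ideal.subset_span (by simp)
  have h2 : ((X 1 + X 0 * C a) - (X 4 + X 3 * C a) : MvPolynomial (Fin 6) ℂ) ∈ I :=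
    Ideal.subset_span (by simp)
  have hx : (X 1 - X 4 : MvPolynomial (Fin 6) ℂ) ∈ I := by
    have := Ideal.sub_mem _ h2 (Ideal.mul_mem_left _ (C a) h1)
    convert this using 1
    ring
  intro p hp
  rcases hp with rfl | rfl
  · simpa using I.zero_mem
  · refine Ideal.sum_mem _ fun i _ => ?_
    obtain ⟨q, hq⟩ := sub_dvd_pow_sub_pow (X 1 : MvPolynomial (Fin 6) ℂ) (X 4) i
    rw [hq]
    exact Ideal.mul_mem_left _ _ (Ideal.mul_mem_right _ _ hx)
end

section
/- Let k ≥ 2 and c ∈ ℂ. Consider the curve φ(s) = (s, 2s², 2s, s, s², s) in ℂ⁶ with coordinates (t, x, y, t′, x′, y′). The pullback along φ of the ideal generated by x − x′, t·c(y − y′), and y² − y′² + x^k − x′^k + t·Σ_{i=1}^{k−2} d_i(x^i − x′^i) is contained in the ideal (s²) of ℂ[s]. Moreover, if the pullback φ*(c(y − y′)) = c·s lies in (s²), then c = 0. -/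
open MvPolynomial

/-- Variables: `t = X 0, x = X 1, y = X 2, t' = X 3, x' = X 4, y' = X 5`.
Pullback along the curve `φ(s) = (s, 2s², 2s, s, s², s)` of the ideal
`⟨x - x', tc(y - y'), y² - y'² + x^k - x'^k + tΣ d_i(x^i - x'^i)⟩` lies in `(s²)`;
moreover `c·s ∈ (s²)` forces `c = 0`. -/
theorem pullback_Dk2_subset_s_sq (k : ℕ) (hk : 2 ≤ k) (c : ℂ) (d : ℕ → ℂ) :
    Ideal.map (aeval (![Polynomial.X, 2 * Polynomial.X ^ 2, 2 * Polynomial.X,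
        Polynomial.X, Polynomial.X ^ 2, Polynomial.X] : Fin 6 → Polynomial ℂ))
      (Ideal.span {(X 1 - X 4 : MvPolynomial (Fin 6) ℂ),
        X 0 * C c * (X 2 - X 5),
        X 2 ^ 2 - X 5 ^ 2 + X 1 ^ k - X 4 ^ k +
          X 0 * ∑ i ∈ Finset.Icc 1 (k - 2), C (d i) * (X 1 ^ i - X 4 ^ i)}) ≤
      Ideal.span {(Polynomial.X ^ 2 : Polynomial ℂ)} ∧
    ((Polynomial.C c * Polynomial.X : Polynomial ℂ) ∈
        Ideal.span {(Polynomial.X ^ 2 : Polynomial ℂ)} → c = 0) := by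
  have e2 : (![Polynomial.X, 2 * Polynomial.X ^ 2, 2 * Polynomial.X, Polynomial.X,
      Polynomial.X ^ 2, Polynomial.X] : Fin 6 → Polynomial ℂ) 2 = 2 * Polynomial.X := rfl
  have e4 : (![Polynomial.X, 2 * Polynomial.X ^ 2, 2 * Polynomial.X, Polynomial.X,
      Polynomial.X ^ 2, Polynomial.X] : Fin 6 → Polynomial ℂ) 4 = Polynomial.X ^ 2 := rfl
  have e5 : (![Polynomial.X, 2 * Polynomial.X ^ 2, 2 * Polynomial.X, Polynomial.X,
      Polynomial.X ^ 2, Polynomial.X] : Fin 6 → Polynomial ℂ) 5 = Polynomial.X := rfl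
  constructor
  · rw [Ideal.map_span, Ideal.span_le]
    rintro p ⟨q, hq, rfl⟩
    simp only [Set.mem_insert_iff, Set.mem_singleton_iff] at hq
    rw [SetLike.mem_coe, Ideal.mem_span_singleton]
    rcases hq with rfl | rfl | rfl
    · simp [Matrix.cons_val_one, Matrix.head_cons]
    · simp only [map_mul, map_sub, aeval_X, aeval_C]
      simp only [Matrix.cons_val_zero, e2, e5]
      exact ⟨algebraMap ℂ (Polynomial ℂ) c, by ring⟩
    · simp only [map_add, map_sub, map_mul, map_pow, map_sum, aeval_X, aeval_C]
      simp only [Matrix.cons_val_zero, Matrix.cons_val_one, Matrix.head_cons, e2, e4, e5]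
      refine dvd_add (dvd_sub (dvd_add (dvd_sub ⟨4, by ring⟩ dvd_rfl)
        (dvd_pow (dvd_mul_left _ _) (by omega))) (dvd_pow dvd_rfl (by omega))) ?_
      rw [pow_two]
      refine mul_dvd_mul_left _ (Finset.dvd_sum fun i hi => ?_)
      have hi1 : i ≠ 0 := by
        have := (Finset.mem_Icc.mp hi).1; omega
      exact Dvd.dvd.mul_left (dvd_sub
        (dvd_pow ⟨2 * Polynomial.X, by ring⟩ hi1)
        (dvd_pow (dvd_mul_left _ _) hi1)) _
  · intro h
    rw [Ideal.mem_span_singleton] at h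
    obtain ⟨q, hq⟩ := h
    have h1 : (Polynomial.C c * Polynomial.X).coeff 1 = (Polynomial.X^2 * q).coeff 1 := by rw [hq]
    simpa [pow_two, mul_assoc, Polynomial.coeff_X_mul] using h1
end

section
/- Let k ≥ 1, ℓ ≥ 2, r = min{k,ℓ}, and a_i, b_j ∈ ℂ. Consider the curve φ(s) = (s^{k+ℓ}, 2s^{k+ℓ}, 2s, s^{k+ℓ}, s^{k+ℓ}, s) in ℂ⁶ with coordinates (t, x, y, t′, x′, y′). Then the pullback along φ of the ideal generated by x − x′, y^k − y′^k + t·Σ_{i=1}^{k−1} a_i(y^i − y′^i), and y^ℓ − y′^ℓ + t·Σ_{j=1}^{ℓ−2} b_j(y^j − y′^j) is contained in the ideal (s^r) of ℂ[s]. -/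
open MvPolynomial

/-- Variables: `t = X 0, x = X 1, y = X 2, t' = X 3, x' = X 4, y' = X 5`.
For the `A_{k+ℓ-1}` family, the pullback along the curve
`φ(s) = (s^{k+ℓ}, 2s^{k+ℓ}, 2s, s^{k+ℓ}, s^{k+ℓ}, s)` of the double ideal `I_D(F̃)` is
contained in `(s^r)` with `r = min k ℓ`. -/
theorem pullback_Akl_subset_s_r (k ℓ : ℕ) (hk : 1 ≤ k) (hℓ : 2 ≤ ℓ) (a b : ℕ → ℂ) :
    Ideal.map (aeval (![Polynomial.X ^ (k + ℓ), 2 * Polynomial.X ^ (k + ℓ),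
        2 * Polynomial.X, Polynomial.X ^ (k + ℓ), Polynomial.X ^ (k + ℓ),
        Polynomial.X] : Fin 6 → Polynomial ℂ))
      (Ideal.span {(X 1 - X 4 : MvPolynomial (Fin 6) ℂ),
        X 2 ^ k - X 5 ^ k + X 0 * ∑ i ∈ Finset.Icc 1 (k - 1), C (a i) * (X 2 ^ i - X 5 ^ i),
        X 2 ^ ℓ - X 5 ^ ℓ + X 0 * ∑ j ∈ Finset.Icc 1 (ℓ - 2), C (b j) * (X 2 ^ j - X 5 ^ j)}) ≤
      Ideal.span {(Polynomial.X ^ min k ℓ : Polynomial ℂ)} := by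
  rw [Ideal.map_span, Ideal.span_le]
  rintro q hq
  simp only [Set.mem_image, Set.mem_insert_iff, Set.mem_singleton_iff] at hq
  obtain ⟨p, hp, rfl⟩ := hq
  rw [SetLike.mem_coe, Ideal.mem_span_singleton]
  have hrk : min k ℓ ≤ k := min_le_left _ _
  have hrl : min k ℓ ≤ ℓ := min_le_right _ _
  have hrkl : min k ℓ ≤ k + ℓ := hrk.trans (Nat.le_add_right _ _)
  rcases hp with rfl | rfl | rfl
  · simp only [map_sub, aeval_X, Matrix.cons_val_one, Matrix.head_cons,
      Matrix.cons_val_four, Matrix.cons_val_succ, Matrix.cons_val_zero]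
    exact dvd_sub ((pow_dvd_pow _ hrkl).mul_left 2) (pow_dvd_pow _ hrkl)
  · simp only [map_add, map_sub, map_mul, map_pow, map_sum, aeval_X, aeval_C,
      Matrix.cons_val_zero, Matrix.cons_val_two, Matrix.tail_cons, Matrix.head_cons,
      Matrix.cons_val_succ]
    refine dvd_add (dvd_sub ?_ (pow_dvd_pow _ hrk)) (Dvd.dvd.mul_right ?_ _)
    · rw [mul_pow]; exact (pow_dvd_pow _ hrk).mul_left _
    · exact pow_dvd_pow _ hrkl
  · simp only [map_add, map_sub, map_mul, map_pow, map_sum, aeval_X, aeval_C,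
      Matrix.cons_val_zero, Matrix.cons_val_two, Matrix.tail_cons, Matrix.head_cons,
      Matrix.cons_val_succ]
    refine dvd_add (dvd_sub ?_ (pow_dvd_pow _ hrl)) (Dvd.dvd.mul_right ?_ _)
    · rw [mul_pow]; exact (pow_dvd_pow _ hrl).mul_left _
    · exact pow_dvd_pow _ hrkl
end

section
/- Let I be an ideal in the ring of real analytic function germs at 0 in ℝ^n generated by f₁,…,f_m, and suppose h is a germ such that there exist C > 0 and a neighborhood U of 0 with |h(z)| ≤ C·max_i |f_i(z)| for all z ∈ U. Then for every real analytic path φ: (ℝ,0) → (ℝ^n,0), the composite h∘φ belongs to the ideal of ℝ{s} generated by f₁∘φ,…,f_m∘φ. -/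
open Filter Topology

lemma bound_of_order_ge {F : ℝ → ℝ} (hF : AnalyticAt ℝ F 0) (d : ℕ)
    (hd : (d : ℕ∞) ≤ (analyticOrderAt F 0)) :
    ∃ M : ℝ, 0 ≤ M ∧ ∀ᶠ s in nhds (0:ℝ), |F s| ≤ M * |s| ^ d := by
  rcases eq_or_ne (analyticOrderAt F 0) ⊤ with ht | ht
  · refine ⟨0, le_refl _, ?_⟩
    filter_upwards [analyticOrderAt_eq_top.mp ht] with s hs
    simp [hs]
  · set k := (analyticOrderAt F 0).toNat with hkdef
    have hk : (k : ℕ∞) = (analyticOrderAt F 0) := ENat.coe_toNat ht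
    have hdk : d ≤ k := by exact_mod_cast hk ▸ hd
    obtain ⟨g, hg, hg0, heq⟩ := (hF.analyticOrderAt_eq_natCast (n := k)).mp hk.symm
    refine ⟨|g 0| + 1, by positivity, ?_⟩
    have h1 : ∀ᶠ s in nhds (0:ℝ), |g s| ≤ |g 0| + 1 := by
      have : ∀ᶠ s in nhds (0:ℝ), g s ∈ Metric.ball (g 0) 1 :=
        hg.continuousAt (Metric.ball_mem_nhds _ one_pos)
      filter_upwards [this] with s hs
      have := mem_ball_iff_norm.mp hs
      calc |g s| = |g 0 + (g s - g 0)| := by ring_nf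
        _ ≤ |g 0| + |g s - g 0| := abs_add_le _ _
        _ ≤ |g 0| + 1 := by
            have h' : |g s - g 0| ≤ 1 := by
              rw [← Real.norm_eq_abs]; exact this.le
            linarith
    have h2 : ∀ᶠ s in nhds (0:ℝ), |s| ≤ 1 := by
      have : Set.Ioo (-1:ℝ) 1 ∈ nhds (0:ℝ) := Ioo_mem_nhds (by norm_num) (by norm_num)
      filter_upwards [this] with s hs
      exact (abs_lt.mpr ⟨hs.1, hs.2⟩).le
    filter_upwards [heq, h1, h2] with s hFs hgs hs1
    rw [hFs, sub_zero, smul_eq_mul, abs_mul, abs_pow]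
    have hpk : |s| ^ k ≤ |s| ^ d := pow_le_pow_of_le_one (abs_nonneg s) hs1 hdk
    calc |s| ^ k * |g s| ≤ |s| ^ d * (|g 0| + 1) :=
          mul_le_mul hpk hgs (abs_nonneg _) (pow_nonneg (abs_nonneg s) d)
      _ = (|g 0| + 1) * |s| ^ d := mul_comm _ _

lemma order_ge_of_bound {F : ℝ → ℝ} (hF : AnalyticAt ℝ F 0) (d : ℕ) (K : ℝ)
    (hb : ∀ᶠ s in nhds (0:ℝ), |F s| ≤ K * |s| ^ d) : (d : ℕ∞) ≤ (analyticOrderAt F 0) := by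
  by_contra hlt
  push_neg at hlt
  have ht : (analyticOrderAt F 0) ≠ ⊤ := fun h => by rw [h] at hlt; exact not_top_lt hlt
  set k := (analyticOrderAt F 0).toNat with hkdef
  have hk : (k : ℕ∞) = (analyticOrderAt F 0) := ENat.coe_toNat ht
  have hkd : k < d := by exact_mod_cast hk ▸ hlt
  obtain ⟨g, hg, hg0, heq⟩ := (hF.analyticOrderAt_eq_natCast (n := k)).mp hk.symm
  have key : ∀ᶠ s in nhdsWithin (0:ℝ) {(0:ℝ)}ᶜ, |g s| ≤ K * |s| ^ (d - k) := by
    filter_upwards [eventually_nhdsWithin_of_eventually_nhds hb,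
      eventually_nhdsWithin_of_eventually_nhds heq, self_mem_nhdsWithin] with s h1 h2 hs
    rw [sub_zero, smul_eq_mul] at h2
    have hs0 : s ≠ 0 := hs
    have hp : (0:ℝ) < |s| ^ k := pow_pos (abs_pos.mpr hs0) k
    have h3 : |s| ^ k * |g s| ≤ K * |s| ^ d := by
      rw [← abs_pow, ← abs_mul, ← h2]; exact h1
    have h4 : K * |s| ^ d = |s| ^ k * (K * |s| ^ (d - k)) := by
      have hdd : k + (d - k) = d := Nat.add_sub_cancel' hkd.le
      conv_lhs => rw [← hdd]
      rw [pow_add]; ring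
    rw [h4] at h3
    exact le_of_mul_le_mul_left h3 hp
  have t1 : Tendsto (fun s => |g s|) (nhdsWithin (0:ℝ) {(0:ℝ)}ᶜ) (nhds |g 0|) :=
    (hg.continuousAt.abs.tendsto).mono_left nhdsWithin_le_nhds
  have t2 : Tendsto (fun s : ℝ => K * |s| ^ (d - k)) (nhdsWithin (0:ℝ) {(0:ℝ)}ᶜ) (nhds 0) := by
    have hc : Continuous (fun s : ℝ => K * |s| ^ (d - k)) := by continuity
    have := (hc.tendsto 0).mono_left (nhdsWithin_le_nhds (s := {(0:ℝ)}ᶜ))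
    simpa [zero_pow (Nat.sub_ne_zero_of_lt hkd)] using this
  have : |g 0| ≤ 0 := le_of_tendsto_of_tendsto t1 t2 key
  exact absurd (lt_of_lt_of_le (abs_pos.mpr hg0) this) (lt_irrefl 0)

/-- One direction of Gaffney's criterion: if `|h(z)| ≤ C · max_i |f_i(z)|` on a neighborhood
of `0`, then for every real analytic path `φ : (ℝ,0) → (ℝⁿ,0)` the composite `h ∘ φ` lies in
the ideal of germs at `0` generated by the `f_i ∘ φ`: there are analytic `g_i` with
`h ∘ φ = Σ g_i · (f_i ∘ φ)` near `0`. -/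
theorem curve_criterion_of_inequality (n m : ℕ) (hm : 0 < m)
    (f : Fin m → (Fin n → ℝ) → ℝ) (h : (Fin n → ℝ) → ℝ)
    (hf : ∀ (i : Fin m) (z : Fin n → ℝ), AnalyticAt ℝ (f i) z)
    (hh : ∀ z : Fin n → ℝ, AnalyticAt ℝ h z)
    (C : ℝ) (hC : 0 < C) (U : Set (Fin n → ℝ)) (hU : U ∈ nhds (0 : Fin n → ℝ))
    (hineq : ∀ z ∈ U, |h z| ≤ C * (Finset.univ.sup'
      (by simpa [Finset.univ_nonempty_iff] using Fin.pos_iff_nonempty.mp hm)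
      fun i : Fin m => |f i z|))
    (φ : ℝ → Fin n → ℝ) (hφ : ∀ s : ℝ, AnalyticAt ℝ φ s) (hφ0 : φ 0 = 0) :
    ∃ g : Fin m → ℝ → ℝ, (∀ i, AnalyticAt ℝ (g i) 0) ∧
      ∀ᶠ s in nhds (0 : ℝ), h (φ s) = ∑ i, g i s * f i (φ s) := by
  have hne : (Finset.univ : Finset (Fin m)).Nonempty := by
    simpa [Finset.univ_nonempty_iff] using Fin.pos_iff_nonempty.mp hm
  -- composed germs
  have hFa : ∀ i, AnalyticAt ℝ (fun s => f i (φ s)) 0 := fun i =>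
    (hf i (φ 0)).comp (hφ 0)
  have hHa : AnalyticAt ℝ (fun s => h (φ s)) 0 := (hh (φ 0)).comp (hφ 0)
  -- the inequality along the path
  have hUφ : ∀ᶠ s in nhds (0:ℝ), φ s ∈ U :=
    (hφ 0).continuousAt.preimage_mem_nhds (by rwa [hφ0])
  have hineq' : ∀ᶠ s in nhds (0:ℝ),
      |h (φ s)| ≤ C * Finset.univ.sup' hne (fun i : Fin m => |f i (φ s)|) := by
    filter_upwards [hUφ] with s hs using hineq (φ s) hs
  by_cases htop : ∀ i, (analyticOrderAt (fun s => f i (φ s)) 0) = ⊤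
  · -- all generators vanish identically along the path
    refine ⟨fun _ _ => 0, fun i => analyticAt_const, ?_⟩
    have hz : ∀ᶠ s in nhds (0:ℝ), ∀ i, f i (φ s) = 0 :=
      Filter.eventually_all.mpr fun i => (analyticOrderAt_eq_top).mp (htop i)
    filter_upwards [hz, hineq'] with s hzs hls
    have : Finset.univ.sup' hne (fun i : Fin m => |f i (φ s)|) ≤ 0 :=
      Finset.sup'_le _ _ fun i _ => by simp [hzs i]
    have h0 : |h (φ s)| ≤ 0 := le_trans hls (by nlinarith)
    have : h (φ s) = 0 := abs_eq_zero.mp (le_antisymm h0 (abs_nonneg _))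
    simp [this]
  · push_neg at htop
    obtain ⟨j0, hj0⟩ := htop
    -- minimal order d among the generators
    obtain ⟨j, -, hj⟩ := Finset.exists_mem_eq_inf' hne (fun i => (analyticOrderAt (fun s => f i (φ s)) 0))
    have hjtop : (analyticOrderAt (fun s => f j (φ s)) 0) ≠ ⊤ := by
      intro hT
      apply hj0
      apply top_le_iff.mp
      rw [← hT, ← hj]
      exact Finset.inf'_le _ (Finset.mem_univ j0)
    set d := (analyticOrderAt (fun s => f j (φ s)) 0).toNat with hddef
    have hjd : (analyticOrderAt (fun s => f j (φ s)) 0) = (d : ℕ∞) := (ENat.coe_toNat hjtop).symm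
    have hdle : ∀ i, (d : ℕ∞) ≤ (analyticOrderAt (fun s => f i (φ s)) 0) := by
      intro i
      rw [← hjd, ← hj]
      exact Finset.inf'_le _ (Finset.mem_univ i)
    obtain ⟨u, hu, hu0, hueq⟩ := ((hFa j).analyticOrderAt_eq_natCast (n := d)).mp hjd
    -- bound all generators by |s|^d
    choose M hM0 hMb using fun i => bound_of_order_ge (hFa i) d (hdle i)
    set M' := Finset.univ.sup' hne M with hM'def
    have hHb : ∀ᶠ s in nhds (0:ℝ), |h (φ s)| ≤ C * M' * |s| ^ d := by
      filter_upwards [hineq', Filter.eventually_all.mpr hMb] with s h1 h2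
      have hsup : Finset.univ.sup' hne (fun i : Fin m => |f i (φ s)|) ≤ M' * |s| ^ d :=
        Finset.sup'_le _ _ fun i _ =>
          le_trans (h2 i) (mul_le_mul_of_nonneg_right
            (Finset.le_sup' M (Finset.mem_univ i)) (pow_nonneg (abs_nonneg s) d))
      calc |h (φ s)| ≤ C * (M' * |s| ^ d) :=
            le_trans h1 (mul_le_mul_of_nonneg_left hsup hC.le)
        _ = C * M' * |s| ^ d := by ring
    have hHord : (d : ℕ∞) ≤ (analyticOrderAt (fun s => h (φ s)) 0) := order_ge_of_bound hHa d (C * M') hHb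
    rcases eq_or_ne (analyticOrderAt (fun s => h (φ s)) 0) ⊤ with hHt | hHt
    · -- h ∘ φ vanishes identically
      refine ⟨fun _ _ => 0, fun i => analyticAt_const, ?_⟩
      filter_upwards [analyticOrderAt_eq_top.mp hHt] with s hs
      simp [hs]
    · set e := (analyticOrderAt (fun s => h (φ s)) 0).toNat with hedef
      have hke : (e : ℕ∞) = (analyticOrderAt (fun s => h (φ s)) 0) := ENat.coe_toNat hHt
      have hde : d ≤ e := by exact_mod_cast hke ▸ hHord
      obtain ⟨w, hw, hw0, hweq⟩ := (hHa.analyticOrderAt_eq_natCast (n := e)).mp hke.symm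
      refine ⟨fun i s => if i = j then s ^ (e - d) * w s / u s else 0, ?_, ?_⟩
      · intro i
        by_cases hij : i = j
        · simp only [hij, if_true]
          exact (((analyticAt_id.pow _).mul hw).div hu hu0)
        · simp only [hij, if_false]
          exact analyticAt_const
      · have hune : ∀ᶠ s in nhds (0:ℝ), u s ≠ 0 :=
          hu.continuousAt.eventually_ne hu0
        filter_upwards [hueq, hweq, hune] with s h1 h2 h3
        rw [sub_zero, smul_eq_mul] at h1 h2
        rw [Finset.sum_eq_single_of_mem j (Finset.mem_univ j)
          (fun i _ hij => by simp [hij])]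
        simp only [if_true]
        rw [h1, h2]
        have hpow : s ^ (e - d) * s ^ d = s ^ e := by
          rw [← pow_add, Nat.sub_add_cancel hde]
        field_simp
        rw [← hpow]
        ring
end
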